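/- Let (R,m) be a Noetherian local ring with infinite residue field and let a be an ideal of R of linear type. Then a is a basic ideal, i.e., a has no reduction other than itself. -/

import Mathlib

open Ideal Submodule Polynomial

variable {R : Type*} [CommRing R]

/-- The canonical presentation of the Rees algebra of `span (range g)`,
sending `ξᵢ` to `gᵢ t`. -/
noncomputable def reesPresentation {m : ℕ} (g : Fin m → R) :
    MvPolynomial (Fin m) R →ₐ[R] reesAlgebra (Ideal.span (Set.range g)) :=
  MvPolynomial.aeval fun i =>
    (⟨Polynomial.monomial 1 (g i), reesAlgebra.monomial_mem.mpr (by
        rw [pow_one]; exact Ideal.subset_span ⟨i, rfl⟩)⟩ :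
      reesAlgebra (Ideal.span (Set.range g)))

/-- The ideal of equations of the Rees algebra for the presentation determined by `g`. -/
noncomputable def reesEquations {m : ℕ} (g : Fin m → R) : Ideal (MvPolynomial (Fin m) R) :=
  RingHom.ker (reesPresentation g).toRingHom

/-- The subideal of an ideal of `MvPolynomial` generated by its homogeneous
elements of degree at most `d`. -/
noncomputable def idealUpToDegree {m : ℕ} (Q : Ideal (MvPolynomial (Fin m) R)) (d : ℕ) :
    Ideal (MvPolynomial (Fin m) R) :=
  Ideal.span {P | P ∈ Q ∧ ∃ e ≤ d, MvPolynomial.IsHomogeneous P e}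

/-- An ideal is of linear type if for some (equivalently, every) finite system of
generators, the ideal of equations of the corresponding presentation of the Rees algebra is
generated by its elements of degree (at most) one, i.e. the relation type equals `1`. -/
def Ideal.IsLinearType (a : Ideal R) : Prop :=
  ∃ (m : ℕ) (g : Fin m → R), Ideal.span (Set.range g) = a ∧
    idealUpToDegree (reesEquations g) 1 = reesEquations g

/-- An ideal `b ⊆ a` is a reduction of `a` if `a^(r+1) = b·a^r` for some `r ≥ 0`. -/
def Ideal.IsReduction (b a : Ideal R) : Prop :=
  b ≤ a ∧ ∃ r : ℕ, a ^ (r + 1) = b * a ^ r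

section Helpers

lemma prod_monomial_aux {ι : Type*} (s : Finset ι) (k : ι → ℕ) (f : ι → R) :
    (∏ i ∈ s, Polynomial.monomial (k i) (f i)) =
      Polynomial.monomial (∑ i ∈ s, k i) (∏ i ∈ s, f i) := by
  classical
  induction s using Finset.induction_on with
  | empty => simp
  | insert _ _ h ih =>
      rw [Finset.prod_insert h, Finset.prod_insert h, Finset.sum_insert h, ih,
        Polynomial.monomial_mul_monomial]

lemma degree_of_mem_support {m : ℕ} {n : ℕ} {P : MvPolynomial (Fin m) R}
    (hP : P.IsHomogeneous n) {d : Fin m →₀ ℕ} (hd : d ∈ P.support) :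
    (∑ i ∈ d.support, d i) = n := by
  have h1 : d.degree = n := by
    rw [Finsupp.degree_eq_weight_one]
    exact hP (MvPolynomial.mem_support_iff.mp hd)
  exact h1

lemma aeval_monomialMap {m : ℕ} (g : Fin m → R) {n : ℕ} {P : MvPolynomial (Fin m) R}
    (hP : P.IsHomogeneous n) :
    MvPolynomial.aeval (fun i => Polynomial.monomial 1 (g i)) P
      = Polynomial.monomial n (MvPolynomial.aeval g P) := by
  conv_lhs => rw [P.as_sum]
  conv_rhs => rw [P.as_sum]
  simp only [map_sum]
  refine Finset.sum_congr rfl fun d hd => ?_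
  rw [MvPolynomial.aeval_monomial, MvPolynomial.aeval_monomial]
  simp only [Finsupp.prod, Polynomial.monomial_pow, one_mul]
  rw [prod_monomial_aux d.support (fun i => d i) (fun i => g i ^ d i),
    degree_of_mem_support hP hd]
  simp [Polynomial.C_mul_monomial, Algebra.algebraMap_self]

lemma reesPresentation_coe {m : ℕ} (g : Fin m → R) {n : ℕ} {P : MvPolynomial (Fin m) R}
    (hP : P.IsHomogeneous n) :
    ((reesPresentation g P : reesAlgebra (Ideal.span (Set.range g))) : R[X])
      = Polynomial.monomial n (MvPolynomial.aeval g P) := by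
  have h2 := MvPolynomial.comp_aeval_apply
    (R := R)
    (f := fun i =>
      (⟨Polynomial.monomial 1 (g i), reesAlgebra.monomial_mem.mpr (by
          rw [pow_one]; exact Ideal.subset_span ⟨i, rfl⟩)⟩ :
        reesAlgebra (Ideal.span (Set.range g))))
    ((reesAlgebra (Ideal.span (Set.range g))).val) P
  exact h2.trans (aeval_monomialMap g hP)

lemma mem_reesEquations_iff {m : ℕ} (g : Fin m → R) {n : ℕ} {P : MvPolynomial (Fin m) R}
    (hP : P.IsHomogeneous n) :
    P ∈ reesEquations g ↔ MvPolynomial.aeval g P = 0 := by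
  have h0 : P ∈ reesEquations g ↔ reesPresentation g P = 0 := Iff.rfl
  rw [h0, ← ZeroMemClass.coe_eq_zero, reesPresentation_coe g hP,
    Polynomial.monomial_eq_zero_iff]

/-- The ideal of values of degree-`n` homogeneous polynomials at `g`. -/
noncomputable def homogEval {m : ℕ} (g : Fin m → R) (n : ℕ) : Ideal R where
  carrier := {x | ∃ P : MvPolynomial (Fin m) R, P.IsHomogeneous n ∧ MvPolynomial.aeval g P = x}
  add_mem' := by
    rintro x y ⟨P, hP, rfl⟩ ⟨Q, hQ, rfl⟩
    exact ⟨P + Q, hP.add hQ, map_add _ _ _⟩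
  zero_mem' := ⟨0, MvPolynomial.isHomogeneous_zero _ _ _, map_zero _⟩
  smul_mem' := by
    rintro c x ⟨P, hP, rfl⟩
    exact ⟨MvPolynomial.C c * P, hP.C_mul c, by simp⟩

lemma mem_homogEval {m : ℕ} {g : Fin m → R} {n : ℕ} {x : R} :
    x ∈ homogEval g n ↔
      ∃ P : MvPolynomial (Fin m) R, P.IsHomogeneous n ∧ MvPolynomial.aeval g P = x :=
  Iff.rfl

lemma span_le_homogEval_one {m : ℕ} (g : Fin m → R) :
    Ideal.span (Set.range g) ≤ homogEval g 1 := by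
  rw [Ideal.span_le]
  rintro _ ⟨i, rfl⟩
  rw [SetLike.mem_coe]
  exact ⟨MvPolynomial.X i, MvPolynomial.isHomogeneous_X _ _, MvPolynomial.aeval_X _ _⟩

lemma span_range_pow {m : ℕ} (g : Fin m → R) (n : ℕ) :
    (Ideal.span (Set.range g)) ^ n = homogEval g n := by
  apply le_antisymm
  · induction n with
    | zero =>
        rw [pow_zero, Ideal.one_eq_top]
        intro x _
        exact ⟨MvPolynomial.C x, MvPolynomial.isHomogeneous_C _ _, by simp⟩
    | succ n ih =>
        rw [pow_succ]
        refine Submodule.mul_le.mpr fun x hx y hy => ?_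
        obtain ⟨P, hP, rfl⟩ := ih hx
        obtain ⟨L, hL, rfl⟩ := span_le_homogEval_one g hy
        exact ⟨P * L, hP.mul hL, _root_.map_mul _ _ _⟩
  · rintro x ⟨P, hP, rfl⟩
    rw [P.as_sum, map_sum]
    refine Ideal.sum_mem _ fun d hd => ?_
    rw [MvPolynomial.aeval_monomial]
    refine Ideal.mul_mem_left _ _ ?_
    rw [Finsupp.prod, ← degree_of_mem_support hP hd, ← Finset.prod_pow_eq_pow_sum]
    exact Ideal.prod_mem_prod fun i _ =>
      Ideal.pow_mem_pow (Ideal.subset_span (Set.mem_range_self i)) _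

lemma finsupp_degree_one {m : ℕ} {d : Fin m →₀ ℕ} (h : d.degree = 1) :
    ∃ j, d = Finsupp.single j 1 := by
  classical
  have hd0 : d ≠ 0 := by
    intro h0
    rw [h0, map_zero] at h
    exact one_ne_zero h.symm
  obtain ⟨j, hj⟩ := Finsupp.support_nonempty_iff.mpr hd0
  have hdj : 1 ≤ d j := Nat.one_le_iff_ne_zero.mpr (Finsupp.mem_support_iff.mp hj)
  have hsum : d j + ∑ i ∈ d.support.erase j, d i = 1 := by
    rw [Finset.add_sum_erase _ _ hj]
    exact h
  have hdj1 : d j = 1 := by omega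
  have hrest : ∑ i ∈ d.support.erase j, d i = 0 := by omega
  refine ⟨j, Finsupp.ext fun i => ?_⟩
  rcases eq_or_ne i j with rfl | hij
  · simp [hdj1]
  · rw [Finsupp.single_eq_of_ne' (Ne.symm hij)]
    by_contra hne
    have hi : i ∈ d.support.erase j :=
      Finset.mem_erase.mpr ⟨hij, Finsupp.mem_support_iff.mpr hne⟩
    have := (Finset.sum_eq_zero_iff.mp hrest) i hi
    exact hne this

lemma isHomogeneous_one_structure {m : ℕ} {P : MvPolynomial (Fin m) R}
    (hP : P.IsHomogeneous 1) :
    P = ∑ i : Fin m,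
      MvPolynomial.C (MvPolynomial.coeff (Finsupp.single i 1) P) * MvPolynomial.X i := by
  classical
  apply MvPolynomial.ext
  intro d
  rw [MvPolynomial.coeff_sum]
  by_cases hd : ∃ j : Fin m, d = Finsupp.single j 1
  · obtain ⟨j, rfl⟩ := hd
    rw [Finset.sum_eq_single j]
    · simp [MvPolynomial.coeff_C_mul, MvPolynomial.coeff_X']
    · intro i _ hij
      rw [MvPolynomial.coeff_C_mul, MvPolynomial.coeff_X', if_neg, mul_zero]
      intro hsingle
      exact hij (by
        have := Finsupp.single_left_injective (α := Fin m) (one_ne_zero (α := ℕ)) hsingle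
        exact this)
    · intro hj; exact absurd (Finset.mem_univ j) hj
  · have h1 : MvPolynomial.coeff d P = 0 := by
      apply hP.coeff_eq_zero
      intro hdeg
      exact hd (finsupp_degree_one hdeg)
    rw [h1]
    refine (Finset.sum_eq_zero fun i _ => ?_).symm
    rw [MvPolynomial.coeff_C_mul, MvPolynomial.coeff_X', if_neg, mul_zero]
    exact fun hsingle => hd ⟨i, hsingle.symm⟩

lemma isHomogeneous_zero_structure {m : ℕ} {P : MvPolynomial (Fin m) R}
    (hP : P.IsHomogeneous 0) :
    P = MvPolynomial.C (MvPolynomial.coeff 0 P) := by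
  apply MvPolynomial.ext
  intro d
  rcases eq_or_ne d 0 with rfl | hd
  · simp
  · rw [hP.coeff_eq_zero, MvPolynomial.coeff_C, if_neg (Ne.symm hd)]
    rw [Ne, Finsupp.degree_eq_zero_iff]
    exact hd

end Helpers

theorem stmt1 {R : Type*} [CommRing R] [IsNoetherianRing R] [IsLocalRing R]
    [Infinite (IsLocalRing.ResidueField R)]
    (a : Ideal R) (ha : a.IsLinearType) :
    ∀ b : Ideal R, b.IsReduction a → b = a := by
  classical
  obtain ⟨m, g, hg, hQ⟩ := ha
  subst hg
  intro b hb
  obtain ⟨hba, r, hr⟩ := hb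
  set k := IsLocalRing.ResidueField R
  set res : R →+* k := IsLocalRing.residue R with hres
  have hresalg : algebraMap R k = res := IsLocalRing.ResidueField.algebraMap_eq R
  -- the generating linear forms
  set qForms : Set (MvPolynomial (Fin m) R) :=
    {P | P ∈ reesEquations g ∧ P.IsHomogeneous 1} with hqForms
  set bForms : Set (MvPolynomial (Fin m) R) :=
    {P | P.IsHomogeneous 1 ∧ MvPolynomial.aeval g P ∈ b} with hbForms
  set coeffVec : MvPolynomial (Fin m) R → (Fin m → k) :=
    fun P i => res (MvPolynomial.coeff (Finsupp.single i 1) P) with hcoeffVec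
  set U : Submodule k (Fin m → k) :=
    Submodule.span k (coeffVec '' (qForms ∪ bForms)) with hU
  by_cases hUtop : U = ⊤
  · -- from U = ⊤ deduce span (range g) ≤ b ⊔ m • span (range g), then Nakayama
    have claimD : ∀ v ∈ U, ∃ w : Fin m → R,
        (∀ i, res (w i) = v i) ∧ (∑ i, w i * g i) ∈ b := by
      intro v hv
      induction hv using Submodule.span_induction with
      | mem v hv =>
          obtain ⟨P, hP, rfl⟩ := hv
          rcases hP with hP | hP
          · refine ⟨fun i => MvPolynomial.coeff (Finsupp.single i 1) P, fun i => rfl, ?_⟩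
            have haeval : MvPolynomial.aeval g P = 0 :=
              (mem_reesEquations_iff g hP.2).mp hP.1
            have hstruct := isHomogeneous_one_structure hP.2
            have : MvPolynomial.aeval g P
                = ∑ i, MvPolynomial.coeff (Finsupp.single i 1) P * g i := by
              conv_lhs => rw [hstruct]
              simp [map_sum]
            rw [← this, haeval]
            exact b.zero_mem
          · refine ⟨fun i => MvPolynomial.coeff (Finsupp.single i 1) P, fun i => rfl, ?_⟩
            have hstruct := isHomogeneous_one_structure hP.1
            have : MvPolynomial.aeval g P
                = ∑ i, MvPolynomial.coeff (Finsupp.single i 1) P * g i := by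
              conv_lhs => rw [hstruct]
              simp [map_sum]
            rw [← this]
            exact hP.2
      | zero => exact ⟨0, fun i => by simp, by simp⟩
      | add x y hx hy ihx ihy =>
          obtain ⟨w1, hw1, hw1b⟩ := ihx
          obtain ⟨w2, hw2, hw2b⟩ := ihy
          refine ⟨w1 + w2, fun i => by simp [hw1 i, hw2 i], ?_⟩
          simp only [Pi.add_apply, add_mul, Finset.sum_add_distrib]
          exact b.add_mem hw1b hw2b
      | smul c x hx ihx =>
          obtain ⟨w, hw, hwb⟩ := ihx
          obtain ⟨c', rfl⟩ := IsLocalRing.residue_surjective (R := R) c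
          refine ⟨fun i => c' * w i, fun i => by simp [hw i]; exact Or.inl rfl, ?_⟩
          rw [show (∑ i, c' * w i * g i) = c' * ∑ i, w i * g i by
            rw [Finset.mul_sum]; exact Finset.sum_congr rfl fun i _ => by ring]
          exact Ideal.mul_mem_left _ _ hwb
    have hle : Ideal.span (Set.range g) ≤ b ⊔ IsLocalRing.maximalIdeal R • Ideal.span (Set.range g) := by
      rw [Ideal.span_le]
      rintro _ ⟨j, rfl⟩
      obtain ⟨w, hw, hwb⟩ := claimD (Pi.single j 1) (hUtop ▸ Submodule.mem_top)
      have hsum1 : (∑ i, (if i = j then (1:R) else 0) * g i) = g j := by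
        simp
      have hgj : g j = (∑ i, w i * g i) + ∑ i, ((if i = j then (1:R) else 0) - w i) * g i := by
        rw [show (∑ i, ((if i = j then (1:R) else 0) - w i) * g i)
            = (∑ i, (if i = j then (1:R) else 0) * g i) - ∑ i, w i * g i by
          rw [← Finset.sum_sub_distrib]
          exact Finset.sum_congr rfl fun i _ => by ring]
        rw [hsum1]
        ring
      rw [hgj]
      refine Submodule.add_mem _ (Submodule.mem_sup_left hwb) (Submodule.mem_sup_right ?_)
      refine Submodule.sum_mem _ fun i _ => ?_
      have hmem : (if i = j then (1:R) else 0) - w i ∈ IsLocalRing.maximalIdeal R := by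
        have : res ((if i = j then (1:R) else 0) - w i) = 0 := by
          rw [map_sub, hw i, Pi.single_apply, apply_ite res]
          simp
        rwa [hres, IsLocalRing.residue_eq_zero_iff] at this
      exact Submodule.smul_mem_smul hmem (Ideal.subset_span ⟨i, rfl⟩)
    have := Submodule.le_of_le_smul_of_le_jacobson_bot (IsNoetherian.noetherian _)
      (IsLocalRing.maximalIdeal_le_jacobson ⊥) hle
    exact le_antisymm hba this
  · -- U ≠ ⊤ : derive a contradiction
    exfalso
    obtain ⟨v₀, hv₀⟩ : ∃ v₀ : Fin m → k, v₀ ∉ U := by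
      by_contra h
      push_neg at h
      exact hUtop (Submodule.eq_top_iff'.mpr h)
    have hq : U.mkQ v₀ ≠ 0 := by
      rw [Submodule.mkQ_apply, Ne, Submodule.Quotient.mk_eq_zero]
      exact hv₀
    obtain ⟨φ₀, hφ₀⟩ : ∃ φ₀ : Module.Dual k ((Fin m → k) ⧸ U), φ₀ (U.mkQ v₀) ≠ 0 := by
      by_contra h
      push_neg at h
      exact hq ((Module.forall_dual_apply_eq_zero_iff k _).mp h)
    set φ' : (Fin m → k) →ₗ[k] k := φ₀.comp U.mkQ with hφ'
    have hφ'U : ∀ v ∈ U, φ' v = 0 := by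
      intro v hv
      have : U.mkQ v = 0 := by
        rw [Submodule.mkQ_apply, Submodule.Quotient.mk_eq_zero]; exact hv
      simp [hφ', this]
    set c : Fin m → k := fun i => φ' (Pi.single i 1) with hc
    have hφ'sum : ∀ v : Fin m → k, φ' v = ∑ i, v i * c i := by
      intro v
      conv_lhs => rw [← Finset.univ_sum_single v]
      rw [map_sum]
      refine Finset.sum_congr rfl fun i _ => ?_
      have h1 : (Pi.single i (v i) : Fin m → k) = v i • (Pi.single i (1 : k) : Fin m → k) := by
        rw [← Pi.single_smul, smul_eq_mul, mul_one]
      rw [h1, map_smul, smul_eq_mul]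
    set ψ : MvPolynomial (Fin m) R →ₐ[R] k := MvPolynomial.aeval c with hψ
    -- ψ vanishes on all linear forms whose coefficient vector lies in U
    have hψlin : ∀ P : MvPolynomial (Fin m) R, P.IsHomogeneous 1 →
        coeffVec P ∈ U → ψ P = 0 := by
      intro P hP hPU
      have hstruct := isHomogeneous_one_structure hP
      have : ψ P = ∑ i, res (MvPolynomial.coeff (Finsupp.single i 1) P) * c i := by
        conv_lhs => rw [hstruct]
        rw [map_sum]
        refine Finset.sum_congr rfl fun i _ => ?_
        rw [_root_.map_mul, hψ, MvPolynomial.aeval_C, MvPolynomial.aeval_X, hresalg]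
      rw [this, ← hφ'sum (coeffVec P)]
      exact hφ'U _ hPU
    -- ψ vanishes on the Rees equations
    have hψQ : ∀ P ∈ reesEquations g, ψ P = 0 := by
      have hker : reesEquations g ≤ RingHom.ker (ψ : MvPolynomial (Fin m) R →+* k) := by
        rw [← hQ, idealUpToDegree, Ideal.span_le]
        rintro P ⟨hPmem, e, he, hPe⟩
        interval_cases e
        · have h0 : MvPolynomial.aeval g P = 0 := (mem_reesEquations_iff g hPe).mp hPmem
          have hPC := isHomogeneous_zero_structure hPe
          have : MvPolynomial.coeff 0 P = 0 := by
            have := congrArg (MvPolynomial.aeval g) hPC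
            rw [h0, MvPolynomial.aeval_C] at this
            exact this.symm
          rw [SetLike.mem_coe, RingHom.mem_ker]
          show ψ P = 0
          rw [hPC, this, map_zero, map_zero]
        · rw [SetLike.mem_coe, RingHom.mem_ker]
          show ψ P = 0
          refine hψlin P hPe (Submodule.subset_span ?_)
          exact ⟨P, Or.inl ⟨hPmem, hPe⟩, rfl⟩
      intro P hP
      exact hker hP
    -- ψ vanishes on the ideal generated by bForms
    have hψb : ∀ P ∈ Ideal.span bForms, ψ P = 0 := by
      have hker : Ideal.span bForms ≤ RingHom.ker (ψ : MvPolynomial (Fin m) R →+* k) := by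
        rw [Ideal.span_le]
        intro P hP
        rw [SetLike.mem_coe, RingHom.mem_ker]
        show ψ P = 0
        exact hψlin P hP.1 (Submodule.subset_span ⟨P, Or.inr hP, rfl⟩)
      intro P hP
      exact hker hP
    -- every c j vanishes
    have hcj : ∀ j, c j = 0 := by
      intro j
      have hgj : g j ^ (r + 1) ∈ b * (Ideal.span (Set.range g)) ^ r := by
        rw [← hr]
        exact Ideal.pow_mem_pow (Ideal.subset_span (Set.mem_range_self j)) _
      have claimC : ∀ x ∈ b * (Ideal.span (Set.range g)) ^ r,
          ∃ P : MvPolynomial (Fin m) R, P.IsHomogeneous (r + 1) ∧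
            MvPolynomial.aeval g P = x ∧ P ∈ Ideal.span bForms := by
        intro x hx
        refine Submodule.mul_induction_on hx ?_ ?_
        · intro y hy z hz
          obtain ⟨P₁, hP₁, rfl⟩ := span_le_homogEval_one g (hba hy)
          have hz' : z ∈ homogEval g r := by rw [← span_range_pow]; exact hz
          obtain ⟨P₂, hP₂, rfl⟩ := hz'
          refine ⟨P₁ * P₂, ?_, _root_.map_mul _ _ _, ?_⟩
          · have := hP₁.mul hP₂
            rwa [add_comm] at this
          · exact Ideal.mul_mem_right _ _ (Ideal.subset_span (show P₁.IsHomogeneous 1 ∧ MvPolynomial.aeval g P₁ ∈ b from ⟨hP₁, hy⟩))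
        · rintro x y ⟨P, hP, rfl, hPb⟩ ⟨P', hP', rfl, hP'b⟩
          exact ⟨P + P', hP.add hP', map_add _ _ _, Ideal.add_mem _ hPb hP'b⟩
      obtain ⟨P, hPhom, hPeval, hPspan⟩ := claimC _ hgj
      have hD : (MvPolynomial.X j ^ (r + 1) - P) ∈ reesEquations g := by
        refine (mem_reesEquations_iff g ((MvPolynomial.isHomogeneous_X_pow j (r+1)).sub hPhom)).mpr ?_
        rw [map_sub, map_pow, MvPolynomial.aeval_X, hPeval, sub_self]
      have hsplit : ψ (MvPolynomial.X j ^ (r + 1))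
          = ψ (MvPolynomial.X j ^ (r + 1) - P) + ψ P := by
        rw [← map_add, sub_add_cancel]
      have hzero : ψ (MvPolynomial.X j ^ (r + 1)) = 0 := by
        rw [hsplit, hψQ _ hD, hψb _ hPspan, add_zero]
      have : c j ^ (r + 1) = 0 := by
        rw [← hzero, map_pow, hψ, MvPolynomial.aeval_X]
      exact pow_eq_zero_iff (Nat.succ_ne_zero r) |>.mp this
    -- contradiction with φ₀ (mkQ v₀) ≠ 0
    apply hφ₀
    have : φ' v₀ = 0 := by
      rw [hφ'sum v₀]
      refine Finset.sum_eq_zero fun i _ => ?_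
      rw [hcj i, mul_zero]
    simpa [hφ'] using this
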